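/- Let A ∈ M₂(ℤ) be an expanding matrix with characteristic polynomial f(x) = x² + x − 3, let v ∈ ℝ² be such that {v, Av} is linearly independent, and define αᵢ, βᵢ by A^{−i}v = αᵢ v + βᵢ Av for i ≥ 1. Then αᵢ ≥ 0 and βᵢ ≥ 0 for all i ≥ 1, and ∑_{i=1}^∞ αᵢ = 2 and ∑_{i=1}^∞ βᵢ = 1. -/

import Mathlib

open Matrix Polynomial

/-- The real matrix obtained from an integer matrix by entrywise coercion. -/
noncomputable def matR {n : ℕ} (A : Matrix (Fin n) (Fin n) ℤ) : Matrix (Fin n) (Fin n) ℝ :=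
  A.map (fun a => (a : ℝ))

/-- An integer matrix is expanding if every complex root of its characteristic
polynomial (i.e. every eigenvalue) has modulus strictly greater than 1. -/
def IsExpanding {n : ℕ} (A : Matrix (Fin n) (Fin n) ℤ) : Prop :=
  ∀ z : ℂ, Polynomial.aeval z A.charpoly = 0 → 1 < ‖z‖

/-- The self-affine set `T(A, D) = { ∑_{i≥1} A^{-i} d_i : d_i ∈ D }`. -/
noncomputable def selfAffine {n : ℕ} (A : Matrix (Fin n) (Fin n) ℤ)
    (D : Set (Fin n → ℝ)) : Set (Fin n → ℝ) :=
  {x | ∃ d : ℕ → (Fin n → ℝ), (∀ i, d i ∈ D) ∧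
    HasSum (fun i => ((matR A)⁻¹ ^ (i + 1)).mulVec (d i)) x}
open Filter

/-- For `A` expanding with characteristic polynomial `x² + x - 3`, the
coordinates `αᵢ, βᵢ` of `A^{-i}v` in the basis `{v, Av}` are nonnegative and
`∑ αᵢ = 2`, `∑ βᵢ = 1`. -/
theorem alpha_beta_sums (A : Matrix (Fin 2) (Fin 2) ℤ) (hA : IsExpanding A)
    (hchar : A.charpoly = X ^ 2 + X - C 3)
    (v : Fin 2 → ℝ) (hv : LinearIndependent ℝ ![v, (matR A).mulVec v])
    (α β : ℕ → ℝ)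
    (hαβ : ∀ i : ℕ, 1 ≤ i →
      ((matR A)⁻¹ ^ i).mulVec v = α i • v + β i • (matR A).mulVec v) :
    (∀ i : ℕ, 1 ≤ i → 0 ≤ α i ∧ 0 ≤ β i) ∧
    HasSum (fun i : ℕ => α (i + 1)) 2 ∧ HasSum (fun i : ℕ => β (i + 1)) 1 := by
  set B := matR A with hBdef
  -- Cayley-Hamilton over ℝ
  have hB : B ^ 2 + B = (3:ℝ) • (1 : Matrix (Fin 2) (Fin 2) ℝ) := by
    have hCH := Matrix.aeval_self_charpoly A
    rw [hchar] at hCH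
    simp only [map_sub, map_add, map_pow, aeval_X, aeval_C] at hCH
    have hZ : A ^ 2 + A = (3 : Matrix (Fin 2) (Fin 2) ℤ) := by
      have h3 : (algebraMap ℤ (Matrix (Fin 2) (Fin 2) ℤ)) 3 = 3 := by simp
      rw [← h3]; exact sub_eq_zero.mp hCH
    have h := congrArg ((Int.castRingHom ℝ).mapMatrix) hZ
    simp only [map_add, map_pow, map_ofNat] at h
    have hm : (Int.castRingHom ℝ).mapMatrix A = B := rfl
    rw [hm] at h
    rw [h, show ((3:ℝ) • (1:Matrix (Fin 2) (Fin 2) ℝ)) = algebraMap ℝ _ 3 from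
      (Algebra.algebraMap_eq_smul_one 3).symm, map_ofNat]
  -- inverse formula
  have hmul : B * ((3⁻¹ : ℝ) • (B + 1)) = 1 := by
    rw [Matrix.mul_smul, mul_add, mul_one, ← pow_two, hB, smul_smul]
    norm_num
  have hmul' : ((3⁻¹ : ℝ) • (B + 1)) * B = 1 := by
    rw [Matrix.smul_mul, add_mul, one_mul, ← pow_two, hB, smul_smul]
    norm_num
  have hinv : B⁻¹ = (3⁻¹ : ℝ) • (B + 1) := Matrix.inv_eq_right_inv hmul
  have hinvB : B⁻¹ * B = 1 := by rw [hinv]; exact hmul'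
  have hinvV : B⁻¹.mulVec v = (3⁻¹ : ℝ) • B.mulVec v + (3⁻¹ : ℝ) • v := by
    rw [hinv, Matrix.smul_mulVec, Matrix.add_mulVec, Matrix.one_mulVec, smul_add]
  -- linear independence: uniqueness of coordinates
  have huniq : ∀ a b c d : ℝ, a • v + b • B.mulVec v = c • v + d • B.mulVec v →
      a = c ∧ b = d := by
    intro a b c d h
    have h0 : (a - c) • v + (b - d) • B.mulVec v = 0 := by
      rw [sub_smul, sub_smul]; rw [← sub_eq_zero] at h; linear_combination (norm := module) h
    have := (Fintype.linearIndependent_iff.mp hv) ![a - c, b - d] (by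
      rw [Fin.sum_univ_two]
      simpa using h0)
    have h1 := this 0
    have h2 := this 1
    simp at h1 h2
    constructor <;> linarith [sub_eq_zero.mp (by linarith : a - c = (0:ℝ))]
  -- base case
  have h1 := hαβ 1 le_rfl
  rw [pow_one, hinvV] at h1
  have hbase := huniq (3⁻¹ : ℝ) (3⁻¹ : ℝ) (α 1) (β 1)
    (by rw [← h1]; abel)
  have hα1 : α 1 = 3⁻¹ := hbase.1.symm
  have hβ1 : β 1 = 3⁻¹ := hbase.2.symm
  -- recurrence
  have hrec : ∀ i : ℕ, 1 ≤ i → α (i + 1) = 3⁻¹ * α i + β i ∧ β (i + 1) = 3⁻¹ * α i := by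
    intro i hi
    have hi' := hαβ i hi
    have hsucc := hαβ (i + 1) (le_trans hi (Nat.le_succ i))
    have key : (B⁻¹ ^ (i + 1)).mulVec v
        = (3⁻¹ * α i + β i) • v + (3⁻¹ * α i) • B.mulVec v := by
      rw [pow_succ', ← Matrix.mulVec_mulVec, hi']
      rw [Matrix.mulVec_add, Matrix.mulVec_smul, Matrix.mulVec_smul, hinvV,
        Matrix.mulVec_mulVec, hinvB, Matrix.one_mulVec]
      module
    rw [key] at hsucc
    exact (huniq _ _ _ _ hsucc).symm |>.symm |> fun h => ⟨h.1.symm, h.2.symm⟩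
  -- nonnegativity
  have hpos : ∀ i : ℕ, 1 ≤ i → 0 ≤ α i ∧ 0 ≤ β i := by
    intro i hi
    induction i with
    | zero => omega
    | succ n ih =>
      rcases Nat.eq_or_lt_of_le hi with h | h
      · have hn0 : n = 0 := by omega
        subst hn0
        constructor <;> norm_num [hα1, hβ1]
      · have hn : 1 ≤ n := by omega
        obtain ⟨ha, hb⟩ := ih hn
        obtain ⟨hr1, hr2⟩ := hrec n hn
        constructor
        · rw [hr1]; positivity
        · rw [hr2]; positivity
  -- decay of s i := α i + β i
  set s : ℕ → ℝ := fun i => α i + β i with hsdef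
  have hs_nonneg : ∀ i, 1 ≤ i → 0 ≤ s i := fun i hi => add_nonneg (hpos i hi).1 (hpos i hi).2
  have hstep : ∀ i, 1 ≤ i → s (i + 2) ≤ (2/3) * s i := by
    intro i hi
    obtain ⟨ha, hb⟩ := hpos i hi
    obtain ⟨hr1, hr2⟩ := hrec i hi
    obtain ⟨hr1', hr2'⟩ := hrec (i+1) (by omega)
    simp only [hsdef]
    rw [show i + 2 = i + 1 + 1 from rfl, hr1', hr2', hr1, hr2]
    nlinarith
  have hgeo : ∀ k : ℕ, s (2*k+1) ≤ (2/3)^(k+1) ∧ s (2*k+2) ≤ (2/3)^(k+1) := by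
    intro k
    induction k with
    | zero =>
      obtain ⟨hr1, hr2⟩ := hrec 1 le_rfl
      constructor
      · simp only [hsdef]; norm_num [hα1, hβ1]
      · simp only [hsdef]
        rw [show 2*0+2 = 1+1 from rfl, hr1, hr2, hα1, hβ1]; norm_num
    | succ k ih =>
      constructor
      · rw [show 2*(k+1)+1 = (2*k+1)+2 by ring]
        calc s ((2*k+1)+2) ≤ (2/3) * s (2*k+1) := hstep (2*k+1) (by omega)
          _ ≤ (2/3) * (2/3)^(k+1) := by nlinarith [ih.1]
          _ = (2/3)^(k+1+1) := by ring
      · rw [show 2*(k+1)+2 = (2*k+2)+2 by ring]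
        calc s ((2*k+2)+2) ≤ (2/3) * s (2*k+2) := hstep (2*k+2) (by omega)
          _ ≤ (2/3) * (2/3)^(k+1) := by nlinarith [ih.2]
          _ = (2/3)^(k+1+1) := by ring
  have hbound : ∀ N : ℕ, s (N + 1) ≤ (2/3)^(N/2 + 1) := by
    intro N
    rcases Nat.even_or_odd N with ⟨k, hk⟩ | ⟨k, hk⟩
    · subst hk
      rw [show (k + k) / 2 = k by omega, show k + k + 1 = 2*k+1 by ring]
      exact (hgeo k).1
    · subst hk
      rw [show (2*k+1)/2 = k by omega, show 2*k+1+1 = 2*k+2 by ring]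
      exact (hgeo k).2
  have hdivtop : Tendsto (fun N : ℕ => N / 2) atTop atTop :=
    Filter.tendsto_atTop_atTop.mpr (fun b => ⟨2*b, fun n hn => by omega⟩)
  have hpowtend : Tendsto (fun N : ℕ => (2/3 : ℝ)^(N/2 + 1)) atTop (nhds 0) := by
    have h1 : Tendsto (fun k : ℕ => (2/3 : ℝ)^(k+1)) atTop (nhds 0) :=
      (tendsto_pow_atTop_nhds_zero_of_lt_one (by norm_num : (0:ℝ) ≤ 2/3)
        (by norm_num)).comp (tendsto_add_atTop_nat 1)
    exact h1.comp hdivtop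
  have hstend : Tendsto (fun N : ℕ => s (N + 1)) atTop (nhds 0) :=
    squeeze_zero (fun N => hs_nonneg _ (by omega)) hbound hpowtend
  -- partial sum identities
  have hPA : ∀ N : ℕ, ∑ i ∈ Finset.range N, α (i+1) = 2 - 3 * s (N+1) := by
    intro N
    induction N with
    | zero => simp only [hsdef, Finset.range_zero, Finset.sum_empty]; norm_num [hα1, hβ1]
    | succ N ih =>
      rw [Finset.sum_range_succ, ih]
      obtain ⟨hr1, hr2⟩ := hrec (N+1) (by omega)
      simp only [hsdef]
      rw [show N + 1 + 1 = N + 2 from rfl] at hr1 hr2 ⊢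
      rw [hr1, hr2]
      ring
  have hPB : ∀ N : ℕ, ∑ i ∈ Finset.range N, β (i+1) = 1 - (α (N+1) + 2 * β (N+1)) := by
    intro N
    induction N with
    | zero => simp only [Finset.range_zero, Finset.sum_empty]; norm_num [hα1, hβ1]
    | succ N ih =>
      rw [Finset.sum_range_succ, ih]
      obtain ⟨hr1, hr2⟩ := hrec (N+1) (by omega)
      rw [show N + 1 + 1 = N + 2 from rfl] at hr1 hr2 ⊢
      rw [hr1, hr2]
      ring
  refine ⟨hpos, ?_, ?_⟩
  · rw [hasSum_iff_tendsto_nat_of_nonneg (fun i => (hpos (i+1) (by omega)).1) 2]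
    have htend : Tendsto (fun N : ℕ => 2 - 3 * s (N+1)) atTop (nhds 2) := by
      have h2 : Tendsto (fun N : ℕ => (2:ℝ) - 3 * s (N+1)) atTop (nhds (2 - 3*0)) :=
        Tendsto.sub tendsto_const_nhds (hstend.const_mul (3:ℝ))
      simpa using h2
    exact htend.congr (fun N => (hPA N).symm)
  · rw [hasSum_iff_tendsto_nat_of_nonneg (fun i => (hpos (i+1) (by omega)).2) 1]
    have httend : Tendsto (fun N : ℕ => α (N+1) + 2 * β (N+1)) atTop (nhds 0) := by
      refine squeeze_zero (fun N => ?_) (fun N => ?_) (by simpa using hstend.const_mul (2:ℝ))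
      · have := hpos (N+1) (by omega); linarith [this.1, this.2]
      · have := hpos (N+1) (by omega)
        simp only [hsdef]
        nlinarith [this.1, this.2]
    have htend : Tendsto (fun N : ℕ => 1 - (α (N+1) + 2 * β (N+1))) atTop (nhds 1) := by
      have h2 : Tendsto (fun N : ℕ => (1:ℝ) - (α (N+1) + 2 * β (N+1))) atTop (nhds (1 - 0)) :=
        Tendsto.sub tendsto_const_nhds httend
      simpa using h2
    exact htend.congr (fun N => (hPB N).symm)
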